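/- For every prime power q and every even m ≥ 2, the covering radius of the first-order generalized Reed–Muller code is exactly ρ(1,m) = (q-1)q^{m-1} − q^{m/2−1}. -/

import Mathlib

/-- The covering radius of the first-order generalized Reed–Muller code `R_q(1,m)`. -/
noncomputable def rmCoveringRadius (F : Type) [Field F] [Fintype F] [DecidableEq F]
    (m : ℕ) : ℕ :=
  Finset.univ.sup fun f : (Fin m → F) → F =>
    sInf {d : ℕ | ∃ a : Fin m → F, ∃ b : F,
      d = hammingDist f (fun x => (∑ i, a i * x i) + b)}

open Polynomial Finset

lemma nat_sub_helper (C A B : ℕ) : (C + A) - (A + B) = C - B := by omega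

lemma nat_pow_helper {q m : ℕ} (hq : 1 ≤ q) (hm : 1 ≤ m) :
    (q - 1) * q ^ (m - 1) + q ^ (m - 1) = q ^ m := by
  have e3 : q - 1 + 1 = q := by omega
  have e1 : m - 1 + 1 = m := by omega
  calc (q-1) * q^(m-1) + q^(m-1) = (q-1+1) * q^(m-1) := by ring
    _ = q^m := by rw [e3, ← pow_succ', e1]


section Helpers

lemma addChar_map_sum {A M ι : Type*} [AddCommMonoid A] [CommMonoid M] (ψ : AddChar A M)
    (s : Finset ι) (g : ι → A) : ψ (∑ i ∈ s, g i) = ∏ i ∈ s, ψ (g i) := by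
  classical
  induction s using Finset.cons_induction with
  | empty => simp
  | cons a s ha ih => rw [Finset.sum_cons, Finset.prod_cons, AddChar.map_add_eq_mul, ih]

end Helpers

section Upper

variable {F : Type} [Field F] [Fintype F] [DecidableEq F]

lemma exists_affine_close {m : ℕ} (hm : 2 ≤ m) (hme : Even m) (f : (Fin m → F) → F) :
    ∃ a : Fin m → F, ∃ b : F,
      hammingDist f (fun x => (∑ i, a i * x i) + b) ≤
        (Fintype.card F - 1) * Fintype.card F ^ (m - 1) - Fintype.card F ^ (m / 2 - 1) := by
  classical
  set q := Fintype.card F with hqdef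
  have hq : 2 ≤ q := Fintype.one_lt_card
  set ψ := AddChar.FiniteField.primitiveChar_to_Complex F with hψdef
  have hψ : ψ.IsPrimitive := AddChar.FiniteField.primitiveChar_to_Complex_isPrimitive F
  have hψne : ψ ≠ 1 := by
    intro h
    have := hψ (a := 1) one_ne_zero
    rw [AddChar.mulShift_one, h] at this
    exact this rfl
  -- norm one
  have hnorm : ∀ u : F, ‖ψ u‖ = 1 := by
    intro u
    have hp0 : ringChar F ≠ 0 := CharP.ringChar_ne_zero_of_finite F
    have h1 : ψ u ^ ringChar F = 1 := by
      rw [← AddChar.map_nsmul_eq_pow]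
      have h2 : (ringChar F) • u = 0 := by
        rw [nsmul_eq_mul, ringChar.Nat.cast_ringChar, zero_mul]
      rw [h2, AddChar.map_zero_eq_one]
    have h3 : ‖ψ u‖ ^ ringChar F = 1 := by
      rw [← norm_pow, h1, norm_one]
    rcases (pow_eq_one_iff_cases.mp h3) with h | h | h
    · exact absurd h hp0
    · exact h
    · nlinarith [norm_nonneg (ψ u), h.1]
  have hconj : ∀ u : F, (starRingEnd ℂ) (ψ u) = ψ (-u) := by
    intro u
    rw [AddChar.map_neg_eq_inv, Complex.inv_eq_conj (hnorm u)]
  -- orthogonality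
  have horth : ∀ v : Fin m → F,
      (∑ a : Fin m → F, ψ (∑ i, a i * v i)) = if v = 0 then ((q : ℂ) ^ m) else 0 := by
    intro v
    by_cases hv : v = 0
    · simp only [hv, if_pos rfl, Pi.zero_apply, mul_zero, Finset.sum_const_zero,
        AddChar.map_zero_eq_one, Finset.sum_const, Finset.card_univ, nsmul_eq_mul, mul_one]
      rw [Fintype.card_fun]
      push_cast
      simp [hqdef]
    · rw [if_neg hv]
      have h1 : (∑ a : Fin m → F, ψ (∑ i, a i * v i))
          = ∑ a ∈ Fintype.piFinset (fun _ : Fin m => (univ : Finset F)),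
              ∏ i, ψ (a i * v i) := by
        rw [Fintype.piFinset_univ]
        exact Finset.sum_congr rfl fun a _ => addChar_map_sum ψ univ _
      rw [h1, ← Finset.prod_univ_sum (fun _ => (univ : Finset F)) (fun i t => ψ (t * v i))]
      obtain ⟨i0, hi0⟩ : ∃ i, v i ≠ 0 := by
        by_contra h
        push_neg at h
        exact hv (funext h)
      refine Finset.prod_eq_zero (Finset.mem_univ i0) ?_
      rw [AddChar.sum_mulShift _ hψ, if_neg hi0]
      norm_num
  -- the transform
  set S : (Fin m → F) → ℂ := fun a => ∑ x, ψ (f x - ∑ i, a i * x i) with hSdef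
  have hpars : ∑ a : Fin m → F, Complex.normSq (S a) = (q : ℝ) ^ m * (q : ℝ) ^ m := by
    have e1 : ∀ a : Fin m → F, (Complex.normSq (S a) : ℂ)
        = ∑ x : Fin m → F, ∑ y : Fin m → F,
            ψ ((f x - f y) + ∑ i, a i * (y i - x i)) := by
      intro a
      rw [← Complex.mul_conj]
      have hcs : (starRingEnd ℂ) (S a) = ∑ y : Fin m → F, ψ (-(f y - ∑ i, a i * y i)) := by
        rw [hSdef, map_sum]
        exact Finset.sum_congr rfl fun y _ => hconj _
      rw [hcs, hSdef]
      rw [Finset.sum_mul_sum]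
      refine Finset.sum_congr rfl fun x _ => Finset.sum_congr rfl fun y _ => ?_
      rw [← AddChar.map_add_eq_mul]
      congr 1
      have h3 : ∑ i, a i * (y i - x i) = (∑ i, a i * y i) - ∑ i, a i * x i := by
        rw [← Finset.sum_sub_distrib]
        exact Finset.sum_congr rfl fun i _ => mul_sub _ _ _
      rw [h3]; ring
    have hinner : ∀ x y : Fin m → F,
        (∑ a : Fin m → F, ψ ((f x - f y) + ∑ i, a i * (y i - x i)))
          = if y = x then ((q : ℂ)) ^ m else 0 := by
      intro x y
      have h4 : ∀ a : Fin m → F, ψ ((f x - f y) + ∑ i, a i * (y i - x i))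
          = ψ (f x - f y) * ψ (∑ i, a i * (y i - x i)) := fun a => AddChar.map_add_eq_mul ψ _ _
      simp only [h4]
      rw [← Finset.mul_sum, horth]
      by_cases h : y = x
      · rw [h]
        have hc : (fun i => x i - x i) = (0 : Fin m → F) := funext fun i => sub_self _
        rw [if_pos hc, if_pos rfl, sub_self, AddChar.map_zero_eq_one, one_mul]
      · have h5 : (fun i => y i - x i) ≠ 0 := by
          intro h6
          apply h
          funext i
          have := congrFun h6 i
          simpa [sub_eq_zero] using this
        rw [if_neg h5, if_neg h, mul_zero]
    have hC : ∑ a : Fin m → F, (Complex.normSq (S a) : ℂ) = ((q:ℂ)) ^ m * ((q:ℂ)) ^ m := by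
      calc ∑ a : Fin m → F, (Complex.normSq (S a) : ℂ)
          = ∑ a : Fin m → F, ∑ x : Fin m → F, ∑ y : Fin m → F,
              ψ ((f x - f y) + ∑ i, a i * (y i - x i)) :=
            Finset.sum_congr rfl fun a _ => e1 a
        _ = ∑ x : Fin m → F, ∑ y : Fin m → F, ∑ a : Fin m → F,
              ψ ((f x - f y) + ∑ i, a i * (y i - x i)) := by
            rw [Finset.sum_comm]
            exact Finset.sum_congr rfl fun x _ => Finset.sum_comm
        _ = ∑ x : Fin m → F, ∑ y : Fin m → F, (if y = x then ((q : ℂ)) ^ m else 0) :=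
            Finset.sum_congr rfl fun x _ => Finset.sum_congr rfl fun y _ => hinner x y
        _ = ∑ _x : Fin m → F, ((q : ℂ)) ^ m :=
            Finset.sum_congr rfl fun x _ => by
              rw [Finset.sum_ite_eq' univ x (fun _ => ((q:ℂ)) ^ m), if_pos (mem_univ x)]
        _ = ((q:ℂ)) ^ m * ((q:ℂ)) ^ m := by
            rw [Finset.sum_const, Finset.card_univ, Fintype.card_fun, Fintype.card_fin,
              nsmul_eq_mul]
            push_cast
            ring
    have hC2 : ((∑ a : Fin m → F, Complex.normSq (S a) : ℝ) : ℂ)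
        = (((q:ℝ) ^ m * (q:ℝ) ^ m : ℝ) : ℂ) := by
      push_cast
      exact hC
    exact_mod_cast hC2
  have hex : ∃ a : Fin m → F, (q:ℝ)^m ≤ Complex.normSq (S a) := by
    by_contra hcon
    push_neg at hcon
    have hlt : ∑ a : Fin m → F, Complex.normSq (S a) < ∑ _a : Fin m → F, (q:ℝ)^m :=
      Finset.sum_lt_sum_of_nonempty univ_nonempty fun a _ => hcon a
    rw [hpars, Finset.sum_const, Finset.card_univ, Fintype.card_fun, Fintype.card_fin,
      nsmul_eq_mul] at hlt
    push_cast at hlt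
    linarith
  obtain ⟨a, ha⟩ := hex
  set n : F → ℕ := fun j => #(univ.filter fun x : Fin m → F => f x - ∑ i, a i * x i = j)
    with hndef
  have hsum : ∑ j : F, n j = q ^ m := by
    have h7 := Finset.card_eq_sum_card_fiberwise
      (f := fun x : Fin m → F => f x - ∑ i, a i * x i) (s := univ) (t := univ)
      (fun x _ => mem_univ _)
    rw [Finset.card_univ, Fintype.card_fun, Fintype.card_fin] at h7
    exact h7.symm
  obtain ⟨j0, -, hj0⟩ := Finset.exists_max_image (univ : Finset F) n univ_nonempty
  have hnle : ∀ j, n j ≤ n j0 := fun j => hj0 j (mem_univ j)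
  have hS2 : S a = ∑ j : F, (n j : ℂ) * ψ j := by
    rw [hSdef]
    calc ∑ x, ψ (f x - ∑ i, a i * x i)
        = ∑ j : F, ∑ x ∈ univ.filter (fun x : Fin m → F => f x - ∑ i, a i * x i = j),
            ψ (f x - ∑ i, a i * x i) :=
          (Finset.sum_fiberwise _ _ _).symm
      _ = ∑ j : F, (n j : ℂ) * ψ j := by
          refine Finset.sum_congr rfl fun j _ => ?_
          rw [Finset.sum_congr rfl (fun x hx => by rw [(Finset.mem_filter.mp hx).2]),
            Finset.sum_const, hndef, nsmul_eq_mul]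
  have hzero : ∑ j : F, ((n j0 : ℂ)) * ψ j = 0 := by
    rw [← Finset.mul_sum, AddChar.sum_eq_zero_of_ne_one hψne, mul_zero]
  have htri : ‖S a‖ ≤ (q : ℝ) * (n j0) - (q:ℝ)^m := by
    have h1 : ∑ j : F, ((n j : ℂ) - (n j0 : ℂ)) * ψ j = S a := by
      have h1a : ∑ j : F, ((n j : ℂ) - (n j0 : ℂ)) * ψ j
          = (∑ j : F, (n j : ℂ) * ψ j) - ∑ j : F, ((n j0 : ℂ)) * ψ j := by
        rw [← Finset.sum_sub_distrib]
        exact Finset.sum_congr rfl fun j _ => by ring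
      rw [h1a, hzero, sub_zero, hS2]
    rw [← h1]
    calc ‖∑ j : F, ((n j : ℂ) - (n j0 : ℂ)) * ψ j‖
        ≤ ∑ j : F, ‖((n j : ℂ) - (n j0 : ℂ)) * ψ j‖ := norm_sum_le _ _
      _ = ∑ j : F, ((n j0 : ℝ) - (n j : ℝ)) := by
          refine Finset.sum_congr rfl fun j _ => ?_
          rw [norm_mul, hnorm, mul_one]
          have h8 : ((n j : ℂ) - (n j0 : ℂ)) = (((n j : ℝ) - (n j0 : ℝ) : ℝ) : ℂ) := by
            push_cast; ring
          rw [h8, Complex.norm_real, Real.norm_eq_abs, abs_sub_comm,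
            abs_of_nonneg (sub_nonneg.mpr (by exact_mod_cast hnle j))]
      _ = (q:ℝ) * n j0 - (q:ℝ)^m := by
          rw [Finset.sum_sub_distrib, Finset.sum_const, Finset.card_univ, nsmul_eq_mul]
          have h9 : ∑ j : F, (n j : ℝ) = ((q^m : ℕ) : ℝ) := by
            rw [← hsum]; push_cast; rfl
          rw [h9]
          push_cast
          ring
  have hlow : (q:ℝ) ^ (m/2) ≤ ‖S a‖ := by
    have h2 : ((q:ℝ) ^ (m/2))^2 ≤ ‖S a‖^2 := by
      have hmm : m/2*2 = m := by
        obtain ⟨k, hk⟩ := hme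
        omega
      rw [← pow_mul, hmm, Complex.sq_norm]
      exact ha
    exact (pow_le_pow_iff_left₀ (by positivity) (norm_nonneg _) two_ne_zero).mp h2
  have hcomb : (q:ℝ)^m + (q:ℝ)^(m/2) ≤ (q:ℝ) * n j0 := by linarith
  have hnat : q^m + q^(m/2) ≤ q * n j0 := by exact_mod_cast hcomb
  have key : q^(m-1) + q^(m/2-1) ≤ n j0 := by
    have e1 : m - 1 + 1 = m := by omega
    have e2 : m/2 - 1 + 1 = m/2 := by omega
    have h1 : q * (q^(m-1) + q^(m/2-1)) = q^m + q^(m/2) := by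
      rw [mul_add, ← pow_succ', ← pow_succ', e1, e2]
    refine Nat.le_of_mul_le_mul_left ?_ (show 0 < q by omega)
    rw [h1]
    exact hnat
  have h1 : (q-1) * q^(m-1) + q^(m-1) = q^m := by
    have e3 : q - 1 + 1 = q := by omega
    have e1 : m - 1 + 1 = m := by omega
    calc (q-1) * q^(m-1) + q^(m-1) = (q-1+1) * q^(m-1) := by ring
      _ = q^m := by rw [e3, ← pow_succ', e1]
  have harith : ∀ C A B : ℕ, (C + A) - (A + B) = C - B := fun C A B => by omega
  refine ⟨a, j0, ?_⟩
  have hagree : #(univ.filter fun x : Fin m → F => f x = (∑ i, a i * x i) + j0) = n j0 := by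
    rw [hndef]
    congr 1
    ext x
    simp only [Finset.mem_filter, Finset.mem_univ, true_and]
    constructor
    · intro h; rw [h]; ring
    · intro h; rw [← h]; ring
  have hdd : hammingDist f (fun x => (∑ i, a i * x i) + j0)
      = #(univ.filter fun x : Fin m → F => ¬ (f x = (∑ i, a i * x i) + j0)) := rfl
  have hsplit : #(univ.filter fun x : Fin m → F => f x = (∑ i, a i * x i) + j0)
      + #(univ.filter fun x : Fin m → F => ¬ (f x = (∑ i, a i * x i) + j0))
      = q ^ m := by
    rw [Finset.card_filter_add_card_filter_not, Finset.card_univ,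
      Fintype.card_fun, Fintype.card_fin]
  have hdist : hammingDist f (fun x => (∑ i, a i * x i) + j0) + n j0 = q ^ m := by
    rw [hdd, ← hagree, Nat.add_comm]
    exact hsplit
  calc hammingDist f (fun x => (∑ i, a i * x i) + j0)
      = q^m - n j0 := Nat.eq_sub_of_add_eq hdist
    _ ≤ q^m - (q^(m-1) + q^(m/2-1)) := Nat.sub_le_sub_left key _
    _ = ((q-1) * q^(m-1) + q^(m-1)) - (q^(m-1) + q^(m/2-1)) := by rw [h1]
    _ = (q-1) * q^(m-1) - q^(m/2-1) := harith _ _ _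

end Upper


noncomputable section RMLower

lemma card_filter_eval_le {L : Type*} [Field L] [Fintype L] [DecidableEq L] (p : L[X])
    (hp : p ≠ 0) : #(univ.filter fun z => p.eval z = 0) ≤ p.natDegree := by
  calc #(univ.filter fun z => p.eval z = 0) ≤ p.roots.toFinset.card := by
        refine Finset.card_le_card fun z hz => ?_
        rw [Multiset.mem_toFinset, Polynomial.mem_roots hp]
        exact (Finset.mem_filter.mp hz).2
    _ ≤ Multiset.card p.roots := Multiset.toFinset_card_le _
    _ ≤ p.natDegree := p.card_roots'

lemma X_pow_add_facts {L : Type*} [Field L] {n : ℕ} {r : L[X]} (h : r.degree < (n : ℕ)) :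
    (X ^ n + r) ≠ 0 ∧ (X ^ n + r).natDegree ≤ n := by
  have hm : (X ^ n + r).Monic := Polynomial.monic_X_pow_add h
  refine ⟨hm.ne_zero, ?_⟩
  refine le_trans (Polynomial.natDegree_add_le _ _) ?_
  simp only [Polynomial.natDegree_X_pow, max_le_iff, le_refl, true_and]
  exact Polynomial.natDegree_le_iff_degree_le.mpr h.le

variable (F : Type) [Field F] [Fintype F] [DecidableEq F] (m : ℕ)

local notation "q" => Fintype.card F

/-- an extension of `F` of degree `m`. -/
def Lext : Type := Polynomial.SplittingField ((X : F[X]) ^ (Fintype.card F ^ m) - X)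

instance : Field (Lext F m) := inferInstanceAs (Field (Polynomial.SplittingField _))
instance : Algebra F (Lext F m) := inferInstanceAs (Algebra F (Polynomial.SplittingField _))
instance : FiniteDimensional F (Lext F m) :=
  inferInstanceAs (FiniteDimensional F (Polynomial.SplittingField _))
instance : Finite (Lext F m) := Module.finite_of_finite F
instance : Fintype (Lext F m) := Fintype.ofFinite _

lemma Lext_finrank (hm : m ≠ 0) : Module.finrank F (Lext F m) = m := by
  classical
  have hq : 1 < Fintype.card F := Fintype.one_lt_card
  set p := ringChar F with hpdef
  obtain ⟨s, hps, hcard⟩ := FiniteField.card F p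
  haveI hfact : Fact p.Prime := ⟨hps⟩
  haveI : CharP (Lext F m) p := charP_of_injective_algebraMap (algebraMap F (Lext F m)).injective p
  have aux : ((X : F[X]) ^ (Fintype.card F ^ m) - X) ≠ 0 :=
    FiniteField.X_pow_card_pow_sub_X_ne_zero _ hm hq
  have hpdvd : p ∣ Fintype.card F ^ m := by
    rw [hcard]
    exact dvd_pow (dvd_pow_self p (by exact_mod_cast s.ne_zero)) hm
  have key : Fintype.card (((X : F[X]) ^ (Fintype.card F ^ m) - X).rootSet (Lext F m))
      = ((X : F[X]) ^ (Fintype.card F ^ m) - X).natDegree :=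
    card_rootSet_eq_natDegree (galois_poly_separable p _ hpdvd)
      (Polynomial.SplittingField.splits _)
  have nat_degree_eq : ((X : F[X]) ^ (Fintype.card F ^ m) - X).natDegree = Fintype.card F ^ m :=
    FiniteField.X_pow_card_pow_sub_X_natDegree_eq _ hm hq
  rw [nat_degree_eq] at key
  have hqm : Fintype.card F ^ m = p ^ (↑s * m) := by
    rw [hcard, ← pow_mul]
  suffices hU : ((X : F[X]) ^ (Fintype.card F ^ m) - X).rootSet (Lext F m) = Set.univ by
    simp_rw [hU, ← Fintype.ofEquiv_card (Equiv.Set.univ _)] at key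
    rw [@Module.card_eq_pow_finrank F _ _ _ _ _ (_)] at key
    exact Nat.pow_right_injective hq key
  rw [Set.eq_univ_iff_forall]
  suffices h2 : ∀ (x) (_ : x ∈ (⊤ : Subalgebra F (Lext F m))),
      x ∈ ((X : F[X]) ^ (Fintype.card F ^ m) - X).rootSet (Lext F m) by
    simpa using h2
  have hadj : Algebra.adjoin F (((X : F[X]) ^ (Fintype.card F ^ m) - X).rootSet (Lext F m))
      = (⊤ : Subalgebra F (Lext F m)) := Polynomial.SplittingField.adjoin_rootSet _
  rw [← hadj]
  simp_rw [Algebra.mem_adjoin_iff]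
  intro x hx
  refine Subring.closure_induction ?_ ?_ ?_ ?_ ?_ ?_ hx <;>
    simp_rw [mem_rootSet_of_ne aux]
  · rintro x (⟨r, rfl⟩ | hx)
    · simp only [map_sub, map_pow, aeval_X]
      rw [← map_pow, FiniteField.pow_card_pow, sub_self]
    · exact (mem_rootSet_of_ne aux).mp hx
  · simp only [map_sub, aeval_X_pow, aeval_X]
    rw [zero_pow (by positivity), sub_zero]
  · simp
  · simp only [aeval_X_pow, aeval_X, map_sub, hqm, add_pow_char_pow, sub_eq_zero]
    intro x y _ _ hx hy
    rw [hx, hy]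
  · intro x _ hx
    simp only [sub_eq_zero, aeval_X_pow, aeval_X, map_sub, sub_neg_eq_add, hqm] at *
    rw [neg_pow, hx, neg_one_pow_char_pow]
    simp
  · simp only [aeval_X_pow, aeval_X, map_sub, mul_pow, sub_eq_zero]
    intro x y _ _ hx hy
    rw [hx, hy]

lemma Lext_card (hm : m ≠ 0) : Fintype.card (Lext F m) = Fintype.card F ^ m := by
  rw [@Module.card_eq_pow_finrank F _ _ _ _ _ (_), Lext_finrank F m hm]


local notation "LL" => Lext F m

set_option maxHeartbeats 1000000 in
lemma exists_good_function (hm : 2 ≤ m) (hme : Even m) :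
    ∃ f : (Fin m → F) → F, ∀ (a : Fin m → F) (b : F),
      #(univ.filter fun x => f x = (∑ i, a i * x i) + b) ≤
        q ^ (m / 2 - 1) * (q ^ (m / 2) + 1) := by
  classical
  have hq : 1 < q := Fintype.one_lt_card
  have hdd1 : 1 ≤ m / 2 := by omega
  have hm2 : m = m / 2 + m / 2 := by
    obtain ⟨k, hk⟩ := hme
    omega
  obtain ⟨s, hps, hcard⟩ := FiniteField.card F (ringChar F)
  haveI hfact : Fact (ringChar F).Prime := ⟨hps⟩
  haveI : CharP LL (ringChar F) :=
    charP_of_injective_algebraMap (algebraMap F LL).injective (ringChar F)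
  have hLcard : Fintype.card LL = q ^ m := Lext_card F m (by omega)
  have hzL : ∀ z : LL, z ^ (q ^ m) = z := by
    intro z
    rw [← hLcard]
    exact FiniteField.pow_card z
  have hfrobadd : ∀ (k : ℕ) (u v : LL), (u + v) ^ q ^ k = u ^ q ^ k + v ^ q ^ k := by
    intro k u v
    rw [hcard, ← pow_mul]
    exact add_pow_char_pow u v _ _
  have hfrobsub : ∀ (k : ℕ) (u v : LL), (u - v) ^ q ^ k = u ^ q ^ k - v ^ q ^ k := by
    intro k u v
    rw [hcard, ← pow_mul]
    exact sub_pow_char_pow u v _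
  have halgpow : ∀ (k : ℕ) (c : F), (algebraMap F LL c) ^ q ^ k = algebraMap F LL c := by
    intro k c
    rw [← map_pow, FiniteField.pow_card_pow]
  have hfrobsum : ∀ {ι : Type} (s : Finset ι) (g : ι → LL) (k : ℕ),
      (∑ i ∈ s, g i) ^ q ^ k = ∑ i ∈ s, (g i) ^ q ^ k := by
    intro ι s g k
    induction s using Finset.cons_induction with
    | empty =>
        simp only [Finset.sum_empty]
        exact zero_pow (pow_ne_zero _ (by omega : q ≠ 0))
    | cons a s ha ih => rw [Finset.sum_cons, Finset.sum_cons, hfrobadd, ih]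
  -- the trace-like map τ
  set τ : LL → LL := fun w => ∑ i ∈ Finset.range (m / 2), w ^ q ^ i with hτdef
  have hτadd : ∀ u v : LL, τ (u + v) = τ u + τ v := by
    intro u v
    rw [hτdef]
    simp only
    rw [← Finset.sum_add_distrib]
    exact Finset.sum_congr rfl fun i _ => hfrobadd i u v
  have hτsub : ∀ u v : LL, τ (u - v) = τ u - τ v := by
    intro u v
    rw [hτdef]
    simp only
    rw [← Finset.sum_sub_distrib]
    exact Finset.sum_congr rfl fun i _ => hfrobsub i u v
  have hτsmul : ∀ (c : F) (w : LL), τ (algebraMap F LL c * w) = algebraMap F LL c * τ w := by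
    intro c w
    rw [hτdef]
    simp only
    rw [Finset.mul_sum]
    refine Finset.sum_congr rfl fun i _ => ?_
    rw [mul_pow, halgpow]
  have hτ0 : τ 0 = 0 := by
    rw [hτdef]
    simp only
    rw [Finset.sum_eq_zero]
    intro i _
    exact zero_pow (pow_ne_zero i (by omega : q ≠ 0))
  have hτq : ∀ v : LL, v ^ q ^ (m / 2) = v → (τ v) ^ q = τ v := by
    intro v hv
    have h1 : (τ v) ^ q = ∑ i ∈ Finset.range (m / 2), v ^ q ^ (i + 1) := by
      rw [hτdef]
      simp only
      have h2 := hfrobsum (Finset.range (m / 2)) (fun i => v ^ q ^ i) 1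
      rw [pow_one] at h2
      rw [h2]
      refine Finset.sum_congr rfl fun i _ => ?_
      rw [← pow_mul, ← pow_succ]
    rw [h1]
    have h3 : ∑ i ∈ Finset.range (m / 2 + 1), v ^ q ^ i
        = (∑ i ∈ Finset.range (m / 2), v ^ q ^ (i + 1)) + v ^ q ^ 0 :=
      Finset.sum_range_succ' _ _
    have h4 : ∑ i ∈ Finset.range (m / 2 + 1), v ^ q ^ i
        = (∑ i ∈ Finset.range (m / 2), v ^ q ^ i) + v ^ q ^ (m / 2) :=
      Finset.sum_range_succ _ _
    rw [h3, hv] at h4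
    rw [pow_zero, pow_one] at h4
    have h5 := add_right_cancel h4
    rw [h5, hτdef]
  -- the linear functional generator T
  set T : LL → LL := fun w => τ (w + w ^ q ^ (m / 2)) with hTdef
  have hQQ : ∀ z : LL, (z ^ q ^ (m / 2)) ^ q ^ (m / 2) = z := by
    intro z
    rw [← pow_mul, ← pow_add, ← hm2]
    exact hzL z
  have hTadd : ∀ u v : LL, T (u + v) = T u + T v := by
    intro u v
    rw [hTdef]
    simp only
    rw [hfrobadd]
    have : u + v + (u ^ q ^ (m / 2) + v ^ q ^ (m / 2))
        = (u + u ^ q ^ (m / 2)) + (v + v ^ q ^ (m / 2)) := by ring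
    rw [this, hτadd]
  have hTsub : ∀ u v : LL, T (u - v) = T u - T v := by
    intro u v
    rw [hTdef]
    simp only
    rw [hfrobsub]
    have : u - v + (u ^ q ^ (m / 2) - v ^ q ^ (m / 2))
        = (u + u ^ q ^ (m / 2)) - (v + v ^ q ^ (m / 2)) := by ring
    rw [this, hτsub]
  have hT0 : T 0 = 0 := by
    rw [hTdef]
    simp only
    rw [zero_pow (pow_ne_zero _ (by omega : q ≠ 0)), add_zero, hτ0]
  have hTsmul : ∀ (c : F) (w : LL), T (algebraMap F LL c * w) = algebraMap F LL c * T w := by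
    intro c w
    rw [hTdef]
    simp only
    rw [mul_pow, halgpow, ← mul_add, hτsmul]
  have hTq : ∀ w : LL, (T w) ^ q = T w := by
    intro w
    refine hτq _ ?_
    rw [hfrobadd, hQQ, add_comm]
  have hTsum : ∀ {ι : Type} (s : Finset ι) (g : ι → LL),
      T (∑ i ∈ s, g i) = ∑ i ∈ s, T (g i) := by
    intro ι s g
    induction s using Finset.cons_induction with
    | empty => simpa using hT0
    | cons a s ha ih => rw [Finset.sum_cons, Finset.sum_cons, hTadd, ih]
  -- the image of F inside LL
  have hXq : ((X : LL[X]) ^ q + (-X)) ≠ 0 ∧ ((X : LL[X]) ^ q + (-X)).natDegree ≤ q := by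
    refine X_pow_add_facts ?_
    rw [Polynomial.degree_neg, Polynomial.degree_X]
    exact_mod_cast hq
  have hFfin_le : #(univ.filter fun u : LL => u ^ q = u) ≤ q := by
    refine le_trans (Finset.card_le_card ?_) (le_trans (card_filter_eval_le _ hXq.1) hXq.2)
    intro u hu
    rw [Finset.mem_filter] at hu ⊢
    refine ⟨Finset.mem_univ _, ?_⟩
    rw [Polynomial.eval_add, Polynomial.eval_pow, Polynomial.eval_neg, Polynomial.eval_X, hu.2]
    ring
  have himg : univ.image (algebraMap F LL) ⊆ univ.filter fun u : LL => u ^ q = u := by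
    intro u hu
    rw [Finset.mem_image] at hu
    obtain ⟨c, -, rfl⟩ := hu
    rw [Finset.mem_filter]
    refine ⟨Finset.mem_univ _, ?_⟩
    have := halgpow 1 c
    rwa [pow_one] at this
  have hcard_img : #(univ.image (algebraMap F LL)) = q := by
    rw [Finset.card_image_of_injective _ (algebraMap F LL).injective, Finset.card_univ]
  have hFfin : #(univ.filter fun u : LL => u ^ q = u) = q :=
    le_antisymm hFfin_le (le_trans hcard_img.symm.le (Finset.card_le_card himg))
  have himg_eq : univ.image (algebraMap F LL) = univ.filter fun u : LL => u ^ q = u :=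
    Finset.eq_of_subset_of_card_le himg (le_trans hFfin.le hcard_img.symm.le)
  have hrange : ∀ u : LL, u ∈ Set.range (algebraMap F LL) ↔ u ^ q = u := by
    intro u
    constructor
    · rintro ⟨c, rfl⟩
      have := halgpow 1 c
      rwa [pow_one] at this
    · intro hu
      have : u ∈ univ.filter fun u : LL => u ^ q = u := Finset.mem_filter.mpr ⟨Finset.mem_univ _, hu⟩
      rw [← himg_eq, Finset.mem_image] at this
      obtain ⟨c, -, hc⟩ := this
      exact ⟨c, hc⟩
  -- basis and linearity
  set B : Module.Basis (Fin m) F LL := Module.finBasisOfFinrankEq F LL (Lext_finrank F m (by omega))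
    with hBdef
  have hTlin : ∀ (ρ z : LL), T (ρ * z) = ∑ i, algebraMap F LL (B.equivFun z i) * T (ρ * B i) := by
    intro ρ z
    conv_lhs => rw [← B.sum_equivFun z]
    rw [Finset.mul_sum, hTsum]
    refine Finset.sum_congr rfl fun i _ => ?_
    rw [mul_smul_comm, Algebra.smul_def, hTsmul]
  -- τ as polynomial evaluation
  have hτeval : ∀ (c w : LL),
      ((∑ i ∈ Finset.range (m/2), (X:LL[X]) ^ q ^ i) - C c).eval w = τ w - c := by
    intro c w
    rw [Polynomial.eval_sub, Polynomial.eval_finset_sum, Polynomial.eval_C, hτdef]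
    simp [Polynomial.eval_pow]
  have hτpoly : ∀ c : LL, ((∑ i ∈ Finset.range (m/2), (X:LL[X]) ^ q ^ i) - C c) ≠ 0 ∧
      ((∑ i ∈ Finset.range (m/2), (X:LL[X]) ^ q ^ i) - C c).natDegree ≤ q ^ (m/2 - 1) := by
    intro c
    obtain ⟨k, hk⟩ : ∃ k, m/2 = k + 1 := ⟨m/2 - 1, by omega⟩
    rw [hk, Nat.add_sub_cancel, Finset.sum_range_succ]
    have heq : (∑ i ∈ Finset.range k, (X:LL[X]) ^ q ^ i) + X ^ (q ^ k) - C c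
        = X ^ (q ^ k) + ((∑ i ∈ Finset.range k, (X:LL[X]) ^ q ^ i) - C c) := by ring
    rw [heq]
    refine X_pow_add_facts ?_
    refine lt_of_le_of_lt (Polynomial.degree_sub_le _ _) ?_
    rw [max_lt_iff]
    constructor
    · refine lt_of_le_of_lt (Polynomial.degree_sum_le _ _) ((Finset.sup_lt_iff ?_).mpr ?_)
      · exact_mod_cast WithBot.bot_lt_coe (q ^ k : ℕ)
      · intro i hi
        rw [Polynomial.degree_X_pow]
        exact_mod_cast Nat.pow_lt_pow_right hq (Finset.mem_range.mp hi)
    · refine lt_of_le_of_lt (Polynomial.degree_C_le) ?_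
      exact_mod_cast pow_pos (by omega : 0 < q) k
  -- injectivity of the functional map
  have hΨinj : Function.Injective (fun ρ : LL => fun i : Fin m => T (ρ * B i)) := by
    intro ρ1 ρ2 hψeq
    by_contra hne
    have hδ : ρ1 - ρ2 ≠ 0 := sub_ne_zero.mpr hne
    have hTz : ∀ z : LL, T ((ρ1 - ρ2) * z) = 0 := by
      intro z
      have h1 : T (ρ1 * z) = T (ρ2 * z) := by
        rw [hTlin, hTlin]
        refine Finset.sum_congr rfl fun i _ => ?_
        rw [show T (ρ1 * B i) = T (ρ2 * B i) from congrFun hψeq i]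
      rw [sub_mul, hTsub, h1, sub_self]
    have hTall : ∀ u : LL, T u = 0 := by
      intro u
      have h2 := hTz ((ρ1 - ρ2)⁻¹ * u)
      rwa [← mul_assoc, mul_inv_cancel₀ hδ, one_mul] at h2
    have hfiber : ∀ w : LL, #(univ.filter fun u : LL => u + u ^ q ^ (m/2) = w) ≤ q ^ (m/2) := by
      intro w
      have hpol : ((X:LL[X]) ^ (q ^ (m/2)) + (X - C w)) ≠ 0 ∧
          ((X:LL[X]) ^ (q ^ (m/2)) + (X - C w)).natDegree ≤ q ^ (m/2) := by
        refine X_pow_add_facts ?_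
        rw [Polynomial.degree_X_sub_C]
        exact_mod_cast Nat.one_lt_pow (by omega) hq
      refine le_trans (Finset.card_le_card ?_) (le_trans (card_filter_eval_le _ hpol.1) hpol.2)
      intro u hu
      rw [Finset.mem_filter] at hu ⊢
      refine ⟨Finset.mem_univ _, ?_⟩
      rw [Polynomial.eval_add, Polynomial.eval_pow, Polynomial.eval_sub, Polynomial.eval_X,
        Polynomial.eval_C, ← hu.2]
      ring
    have himgQ : q ^ (m/2) ≤ #(univ.image (fun u : LL => u + u ^ q ^ (m/2))) := by
      have h1 := Finset.card_le_mul_card_image (f := fun u : LL => u + u ^ q ^ (m/2))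
        (univ : Finset LL) (q ^ (m/2)) (fun w _ => hfiber w)
      rw [Finset.card_univ, hLcard] at h1
      have h2 : q ^ m = q ^ (m/2) * q ^ (m/2) := by rw [← pow_add, ← hm2]
      rw [h2] at h1
      exact Nat.le_of_mul_le_mul_left h1 (pow_pos (by omega) _)
    have himgzero : univ.image (fun u : LL => u + u ^ q ^ (m/2))
        ⊆ univ.filter (fun w : LL =>
          ((∑ i ∈ Finset.range (m/2), (X:LL[X]) ^ q ^ i) - C 0).eval w = 0) := by
      intro w hw
      rw [Finset.mem_image] at hw
      obtain ⟨u, -, rfl⟩ := hw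
      rw [Finset.mem_filter]
      refine ⟨Finset.mem_univ _, ?_⟩
      rw [hτeval, sub_zero]
      have h3 := hTall u
      rw [hTdef] at h3
      exact h3
    have hcontr : q ^ (m/2) ≤ q ^ (m/2 - 1) := by
      refine le_trans himgQ (le_trans (Finset.card_le_card himgzero) ?_)
      exact le_trans (card_filter_eval_le _ (hτpoly 0).1) (hτpoly 0).2
    have h4 : q ^ (m/2 - 1) < q ^ (m/2) := Nat.pow_lt_pow_right hq (by omega)
    omega
  -- image covers all vectors with entries in the image of F
  have hSfin : #(univ.filter fun v : Fin m → LL => ∀ i, (v i) ^ q = v i) = q ^ m := by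
    have h1 : (univ.filter fun v : Fin m → LL => ∀ i, (v i) ^ q = v i)
        = Fintype.piFinset (fun _ : Fin m => univ.filter fun u : LL => u ^ q = u) := by
      ext v
      simp [Fintype.mem_piFinset]
    rw [h1, Fintype.card_piFinset]
    simp [hFfin]
  have himgΨ : univ.image (fun ρ : LL => fun i : Fin m => T (ρ * B i))
      = univ.filter fun v : Fin m → LL => ∀ i, (v i) ^ q = v i := by
    refine Finset.eq_of_subset_of_card_le ?_ ?_
    · intro v hv
      rw [Finset.mem_image] at hv
      obtain ⟨ρ, -, rfl⟩ := hv
      exact Finset.mem_filter.mpr ⟨Finset.mem_univ _, fun i => hTq _⟩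
    · rw [hSfin, Finset.card_image_of_injective _ hΨinj, Finset.card_univ, hLcard]
  have hrep : ∀ a : Fin m → F, ∃ ρ : LL, ∀ i, T (ρ * B i) = algebraMap F LL (a i) := by
    intro a
    have hv : (fun i : Fin m => algebraMap F LL (a i)) ∈
        univ.filter fun v : Fin m → LL => ∀ i, (v i) ^ q = v i := by
      refine Finset.mem_filter.mpr ⟨Finset.mem_univ _, fun i => ?_⟩
      have h5 := halgpow 1 (a i)
      rwa [pow_one] at h5
    rw [← himgΨ, Finset.mem_image] at hv
    obtain ⟨ρ, -, hρ⟩ := hv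
    exact ⟨ρ, fun i => congrFun hρ i⟩
  -- the quadratic function
  have hNfix : ∀ z : LL, (z ^ (q ^ (m/2) + 1)) ^ q ^ (m/2) = z ^ (q ^ (m/2) + 1) := by
    intro z
    have h1 : (q^(m/2)+1) * q^(m/2) = q^m + q^(m/2) := by
      have h2 : q^m = q^(m/2) * q^(m/2) := by rw [← pow_add, ← hm2]
      rw [h2]; ring
    rw [← pow_mul, h1, pow_add, hzL, pow_succ]
    ring
  have hτNmem : ∀ z : LL, τ (z ^ (q ^ (m/2) + 1)) ∈ Set.range (algebraMap F LL) := by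
    intro z
    rw [hrange]
    exact hτq _ (hNfix z)
  set f : (Fin m → F) → F := fun x =>
    Function.invFun (algebraMap F LL) (τ ((B.equivFun.symm x) ^ (q ^ (m/2) + 1))) with hfdef
  have halg_f : ∀ x, algebraMap F LL (f x) = τ ((B.equivFun.symm x) ^ (q ^ (m/2) + 1)) := by
    intro x
    rw [hfdef]
    exact Function.invFun_eq (hτNmem _)
  refine ⟨f, ?_⟩
  intro a b
  obtain ⟨ρ, hρ⟩ := hrep a
  have hlinrep : ∀ x : Fin m → F,
      algebraMap F LL (∑ i, a i * x i) = T (ρ * B.equivFun.symm x) := by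
    intro x
    rw [hTlin, map_sum]
    refine Finset.sum_congr rfl fun i _ => ?_
    rw [LinearEquiv.apply_symm_apply, map_mul, hρ i]
    ring
  have hcond : ∀ x : Fin m → F,
      (f x = (∑ i, a i * x i) + b ↔
        τ ((B.equivFun.symm x) ^ (q ^ (m/2) + 1)
            - (ρ * B.equivFun.symm x + (ρ * B.equivFun.symm x) ^ q ^ (m/2)))
          = algebraMap F LL b) := by
    intro x
    calc f x = (∑ i, a i * x i) + b
        ↔ algebraMap F LL (f x) = algebraMap F LL ((∑ i, a i * x i) + b) :=
          ⟨fun h => by rw [h], fun h => (algebraMap F LL).injective h⟩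
      _ ↔ τ ((B.equivFun.symm x) ^ (q ^ (m/2) + 1))
            = τ (ρ * B.equivFun.symm x + (ρ * B.equivFun.symm x) ^ q ^ (m/2))
              + algebraMap F LL b := by
          rw [halg_f, map_add, hlinrep, hTdef]
      _ ↔ τ ((B.equivFun.symm x) ^ (q ^ (m/2) + 1))
            - τ (ρ * B.equivFun.symm x + (ρ * B.equivFun.symm x) ^ q ^ (m/2))
          = algebraMap F LL b :=
          ⟨fun h => by rw [h]; ring, fun h => by rw [← h]; ring⟩
      _ ↔ τ ((B.equivFun.symm x) ^ (q ^ (m/2) + 1)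
            - (ρ * B.equivFun.symm x + (ρ * B.equivFun.symm x) ^ q ^ (m/2)))
          = algebraMap F LL b := by rw [hτsub]
  set hfun : LL → LL := fun z => z ^ (q^(m/2)+1) - (ρ * z + (ρ * z) ^ q ^ (m/2)) with hhdef
  have hcard_eq : #(univ.filter fun x : Fin m → F => f x = (∑ i, a i * x i) + b)
      = #(univ.filter fun z : LL => τ (hfun z) = algebraMap F LL b) := by
    refine Finset.card_bij (fun x _ => B.equivFun.symm x) ?_ ?_ ?_
    · intro x hx
      rw [Finset.mem_filter] at hx ⊢
      refine ⟨Finset.mem_univ _, ?_⟩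
      rw [hhdef]
      exact (hcond x).mp hx.2
    · intro x1 _ x2 _ hx
      exact B.equivFun.symm.injective hx
    · intro z hz
      refine ⟨B.equivFun z, Finset.mem_filter.mpr ⟨Finset.mem_univ _, ?_⟩,
        LinearEquiv.symm_apply_apply _ _⟩
      have hz2 := (Finset.mem_filter.mp hz).2
      apply (hcond _).mpr
      rw [LinearEquiv.symm_apply_apply]
      rw [hhdef] at hz2
      exact hz2
  have hfib : ∀ w : LL, #((univ.filter fun z : LL => τ (hfun z) = algebraMap F LL b).filter
      fun z => hfun z = w) ≤ q ^ (m/2) + 1 := by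
    intro w
    have hpol : ((X:LL[X]) ^ (q^(m/2)+1) +
        (-(C ρ * X + C (ρ^q^(m/2)) * X ^ q^(m/2)) - C w)) ≠ 0 ∧
        ((X:LL[X]) ^ (q^(m/2)+1) +
        (-(C ρ * X + C (ρ^q^(m/2)) * X ^ q^(m/2)) - C w)).natDegree ≤ q^(m/2)+1 := by
      refine X_pow_add_facts ?_
      refine lt_of_le_of_lt (Polynomial.degree_sub_le _ _) ?_
      rw [max_lt_iff]
      constructor
      · rw [Polynomial.degree_neg]
        refine lt_of_le_of_lt (Polynomial.degree_add_le _ _) ?_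
        rw [max_lt_iff]
        constructor
        · refine lt_of_le_of_lt (Polynomial.degree_C_mul_X_le _) ?_
          have h6 : 1 < q ^ (m/2) + 1 :=
            Nat.succ_lt_succ (pow_pos (Nat.lt_trans Nat.zero_lt_one hq) _)
          exact_mod_cast h6
        · refine lt_of_le_of_lt (Polynomial.degree_C_mul_X_pow_le _ _) ?_
          exact_mod_cast Nat.lt_succ_self (q ^ (m/2))
      · refine lt_of_le_of_lt (Polynomial.degree_C_le) ?_
        exact_mod_cast Nat.succ_pos (q ^ (m/2))
    refine le_trans (Finset.card_le_card ?_) (le_trans (card_filter_eval_le _ hpol.1) hpol.2)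
    intro z hz
    rw [Finset.mem_filter] at hz
    have hz2 := hz.2
    rw [Finset.mem_filter]
    refine ⟨Finset.mem_univ _, ?_⟩
    simp only [Polynomial.eval_add, Polynomial.eval_sub, Polynomial.eval_neg,
      Polynomial.eval_mul, Polynomial.eval_pow, Polynomial.eval_C, Polynomial.eval_X]
    rw [← hz2, hhdef]
    simp only
    rw [mul_pow]
    ring
  have hUcard : #(univ.filter fun w : LL => τ w = algebraMap F LL b) ≤ q ^ (m/2 - 1) := by
    refine le_trans (Finset.card_le_card ?_)
      (le_trans (card_filter_eval_le _ (hτpoly (algebraMap F LL b)).1)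
        (hτpoly (algebraMap F LL b)).2)
    intro w hw
    rw [Finset.mem_filter] at hw ⊢
    refine ⟨Finset.mem_univ _, ?_⟩
    rw [hτeval, hw.2, sub_self]
  calc #(univ.filter fun x : Fin m → F => f x = (∑ i, a i * x i) + b)
      = #(univ.filter fun z : LL => τ (hfun z) = algebraMap F LL b) := hcard_eq
    _ = ∑ w ∈ univ.filter (fun w : LL => τ w = algebraMap F LL b),
          #((univ.filter fun z : LL => τ (hfun z) = algebraMap F LL b).filter
            fun z => hfun z = w) := by
        refine Finset.card_eq_sum_card_fiberwise fun z hz => ?_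
        rw [Finset.mem_coe, Finset.mem_filter] at hz ⊢
        exact ⟨Finset.mem_univ _, hz.2⟩
    _ ≤ ∑ _w ∈ univ.filter (fun w : LL => τ w = algebraMap F LL b), (q ^ (m/2) + 1) :=
        Finset.sum_le_sum fun w _ => hfib w
    _ = #(univ.filter fun w : LL => τ w = algebraMap F LL b) * (q ^ (m/2) + 1) := by
        rw [Finset.sum_const, smul_eq_mul]
    _ ≤ q ^ (m/2 - 1) * (q ^ (m/2) + 1) := Nat.mul_le_mul_right _ hUcard



end RMLower


/-- for `m` even, `m ≥ 2`, `ρ(1,m) = (q-1)q^{m-1} - q^{m/2-1}`. -/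
theorem rmCoveringRadius_eq_of_even
    {F : Type} [Field F] [Fintype F] [DecidableEq F] {m : ℕ}
    (hm : 2 ≤ m) (hme : Even m) :
    rmCoveringRadius F m =
      (Fintype.card F - 1) * Fintype.card F ^ (m - 1) - Fintype.card F ^ (m / 2 - 1) := by
  classical
  have hq : 1 < Fintype.card F := Fintype.one_lt_card
  have he : m/2 - 1 + m/2 = m - 1 := by
    obtain ⟨k, hk⟩ := hme
    omega
  have h1 : (Fintype.card F - 1) * Fintype.card F ^ (m-1) + Fintype.card F ^ (m-1)
      = Fintype.card F ^ m := nat_pow_helper (by omega) (by omega)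
  unfold rmCoveringRadius
  apply le_antisymm
  · refine Finset.sup_le fun f _ => ?_
    obtain ⟨a, b, hab⟩ := exists_affine_close hm hme f
    exact le_trans (Nat.sInf_le ⟨a, b, rfl⟩) hab
  · obtain ⟨f, hf⟩ := exists_good_function F m hm hme
    refine le_trans ?_ (Finset.le_sup (Finset.mem_univ f))
    refine le_csInf ⟨_, 0, 0, rfl⟩ ?_
    rintro d ⟨a, b, rfl⟩
    have hA : #(univ.filter fun x : Fin m → F => f x = (∑ i, a i * x i) + b)
        ≤ Fintype.card F ^ (m-1) + Fintype.card F ^ (m/2-1) := by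
      refine le_trans (hf a b) (le_of_eq ?_)
      rw [mul_add, mul_one, ← pow_add, he]
    have hsplit : #(univ.filter fun x : Fin m → F => f x = (∑ i, a i * x i) + b)
        + #(univ.filter fun x : Fin m → F => ¬ (f x = (∑ i, a i * x i) + b))
        = Fintype.card F ^ m := by
      rw [Finset.card_filter_add_card_filter_not, Finset.card_univ,
        Fintype.card_fun, Fintype.card_fin]
    have hdd : hammingDist f (fun x => (∑ i, a i * x i) + b)
        = #(univ.filter fun x : Fin m → F => ¬ (f x = (∑ i, a i * x i) + b)) := rfl
    calc (Fintype.card F - 1) * Fintype.card F ^ (m - 1) - Fintype.card F ^ (m / 2 - 1)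
        = ((Fintype.card F - 1) * Fintype.card F ^ (m-1) + Fintype.card F ^ (m-1))
          - (Fintype.card F ^ (m-1) + Fintype.card F ^ (m/2-1)) := (nat_sub_helper _ _ _).symm
      _ = Fintype.card F ^ m - (Fintype.card F ^ (m-1) + Fintype.card F ^ (m/2-1)) := by
          rw [h1]
      _ ≤ Fintype.card F ^ m
          - #(univ.filter fun x : Fin m → F => f x = (∑ i, a i * x i) + b) :=
          Nat.sub_le_sub_left hA _
      _ = hammingDist f (fun x => (∑ i, a i * x i) + b) := by
          rw [hdd]
          exact Nat.sub_eq_of_eq_add (by rw [← hsplit, Nat.add_comm])
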